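/- arXiv:1105.6317 — 3 statements merged into one kernel-verified Lean document; each statement's English description precedes it below -/
import Mathlib

section
/- Let P : F → Set D be a thread preserver in a system of difference-variable constraints satisfying the join-closure property, and suppose for each flow point f there is α_f ∈ P(f) that is minimal in the containment order among elements of P(f) and is below (⊑) every element of P(f) (i.e., a least element). Then f ↦ {α_f} is a singleton thread preserver: every transition (f, g, R) satisfies R(α_f, α_g). -/
/-- If P is a thread preserver in a system whose transition relations satisfy
the join-closure properties, and each P f has a least element α_f in the
containment order, then f ↦ {α_f} is a singleton thread preserver. -/
theorem stmt_11 {F D : Type*} [SemilatticeSup D]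
    (T : Set (F × F × (D → D → Prop)))
    (hclos : ∀ τ ∈ T,
      (∀ α β γ : D, τ.2.2 α β → α ≤ γ → τ.2.2 γ β) ∧
      (∀ α β γ δ : D, τ.2.2 α β → τ.2.2 α γ → δ ≤ β ⊔ γ → τ.2.2 α δ))
    (P : F → Set D)
    (hTP : ∀ τ ∈ T, ∀ α ∈ P τ.1, ∃ β ∈ P τ.2.1, τ.2.2 α β)
    (hfin : ∀ f, (P f).Finite)
    (a : F → D)
    (hleast : ∀ f, a f ∈ P f ∧ ∀ β ∈ P f, a f ≤ β) :
    ∀ τ ∈ T, τ.2.2 (a τ.1) (a τ.2.1) := by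
  intro τ hτ
  obtain ⟨β, hβ, hR⟩ := hTP τ hτ _ (hleast τ.1).1
  exact (hclos τ hτ).2 _ β β _ hR hR (le_trans ((hleast τ.2.1).2 β hβ) le_sup_left)
end

section
/- Let G be a relation on a finite set V of 2n nodes (n 'source' nodes and n 'target' nodes) representing an idempotent cyclic MC, extended with shortcut identifications x_i' ↔ x_i. If G^♦ contains a forward cycle F traversing s shortcut edges and a backward cycle B traversing ŝ shortcut edges, at least one cycle strict, and an arc from a node of F to a node of B, then the infinite unwinding (G)^ω contains an infinite down-thread and an infinite up-thread, one of them infinitely often strict, with the down-thread node related (≥) to the up-thread node at each time step (after appropriate path closure). In particular, (G)^ω is unsatisfiable over ℤ. -/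
lemma per_mul {α : Type*} (f : ℕ → α) (s : ℕ) (hp : ∀ k, f (k + s) = f k) :
    ∀ q r, f (r + q * s) = f r := by
  intro q
  induction q with
  | zero => simp
  | succ q ih =>
    intro r
    have h : r + (q + 1) * s = (r + q * s) + s := by ring
    rw [h, hp, ih]

lemma block_shift (f : ℕ → ℤ) (s : ℕ) (hp : ∀ k, f (k + s) = f k) (c : ℕ) :
    ∑ j ∈ Finset.range s, f (c + 1 + j) = ∑ j ∈ Finset.range s, f (c + j) := by
  have h1 : ∑ j ∈ Finset.range (s + 1), f (c + j)
      = (∑ j ∈ Finset.range s, f (c + (j + 1))) + f (c + 0) :=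
    Finset.sum_range_succ' _ _
  have h2 : ∑ j ∈ Finset.range (s + 1), f (c + j)
      = (∑ j ∈ Finset.range s, f (c + j)) + f (c + s) :=
    Finset.sum_range_succ _ _
  have h3 : ∑ j ∈ Finset.range s, f (c + (j + 1)) = ∑ j ∈ Finset.range s, f (c + 1 + j) := by
    apply Finset.sum_congr rfl
    intro j _
    congr 1
    omega
  have h4 : f (c + s) = f c := hp c
  simp only [Nat.add_zero] at h1
  linarith [h1, h2, h3]

lemma block_const (f : ℕ → ℤ) (s : ℕ) (hp : ∀ k, f (k + s) = f k) :
    ∀ c, ∑ j ∈ Finset.range s, f (c + j) = ∑ j ∈ Finset.range s, f j := by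
  intro c
  induction c with
  | zero => simp
  | succ c ih => rw [← ih]; exact block_shift f s hp c

lemma block_le (f : ℕ → ℤ) (s : ℕ) (hs : 1 ≤ s) (hp : ∀ k, f (k + s) = f k)
    (hnp : ∀ k, f k ≤ 0) (hstr : ∃ k, f k = -1) :
    ∑ j ∈ Finset.range s, f j ≤ -1 := by
  obtain ⟨k, hk⟩ := hstr
  have hmod : f (k % s) = f k := by
    conv_rhs => rw [← Nat.mod_add_div' k s]
    rw [per_mul f s hp]
  have hmem : k % s ∈ Finset.range s := Finset.mem_range.mpr (Nat.mod_lt _ hs)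
  calc ∑ j ∈ Finset.range s, f j
      ≤ ∑ j ∈ Finset.range s, (if j = k % s then (-1 : ℤ) else 0) := by
        apply Finset.sum_le_sum
        intro j _
        by_cases h : j = k % s
        · rw [if_pos h, h]; exact le_of_eq (hmod.trans hk)
        · simp [h, hnp j]
    _ = -1 := by rw [Finset.sum_ite_eq' (Finset.range s) (k % s) (fun _ => (-1 : ℤ))]; simp [hmem]

lemma sum_blocks (f : ℕ → ℤ) (s : ℕ) (hs : 1 ≤ s) (hp : ∀ k, f (k + s) = f k)
    (hnp : ∀ k, f k ≤ 0) (hstr : ∃ k, f k = -1) :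
    ∀ m c, ∑ j ∈ Finset.range (m * s), f (c + j) ≤ -(m : ℤ) := by
  intro m
  induction m with
  | zero => simp
  | succ m ih =>
    intro c
    have hsplit : ∑ j ∈ Finset.range (m * s + s), f (c + j)
        = (∑ j ∈ Finset.range (m * s), f (c + j))
          + ∑ j ∈ Finset.range s, f (c + m * s + j) := by
      rw [Finset.sum_range_add]
      congr 1
      apply Finset.sum_congr rfl
      intro j _
      congr 1
      omega
    have h1 := ih c
    have h2 : ∑ j ∈ Finset.range s, f (c + m * s + j) ≤ -1 := by
      rw [block_const f s hp]; exact block_le f s hs hp hnp ⟨_, hstr.choose_spec⟩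
    have hms : (m + 1) * s = m * s + s := by ring
    rw [hms, hsplit]
    push_cast
    linarith

/-- Soundness of the local test LTTS for an idempotent cyclic MC G, given in
weighted-graph form (arc u → v of weight 0 meaning ≥, weight −1 meaning >):
if G^♦ has a (periodic) forward cycle `hi` (unwinding to a down-thread), a
backward cycle `lo` (unwinding to an up-thread), at least one of them strict,
and an arc from a node of the forward cycle to a node of the backward cycle,
then the infinite unwinding (G)^ω is unsatisfiable over ℤ: no assignment
σ : ℕ × {1..n} → ℤ satisfies all the arcs of every copy of G. -/
theorem stmt_16 (n s₁ s₂ : ℕ) (hs₁ : 1 ≤ s₁) (hs₂ : 1 ≤ s₂)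
    (Arc : (Fin n ⊕ Fin n) → (Fin n ⊕ Fin n) → ℤ → Prop)
    (hi lo : ℕ → Fin n) (wF wB : ℕ → ℤ)
    (hper : ∀ k, hi (k + s₁) = hi k) (lper : ∀ k, lo (k + s₂) = lo k)
    (wFper : ∀ k, wF (k + s₁) = wF k) (wBper : ∀ k, wB (k + s₂) = wB k)
    (hF : ∀ k, Arc (Sum.inl (hi k)) (Sum.inr (hi (k + 1))) (wF k) ∧
      (wF k = 0 ∨ wF k = -1))
    (hB : ∀ k, Arc (Sum.inr (lo k)) (Sum.inl (lo (k + 1))) (wB k) ∧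
      (wB k = 0 ∨ wB k = -1))
    (hstrict : (∃ k, wF k = -1) ∨ (∃ k, wB k = -1))
    (a b : ℕ)
    (harc : ∃ w, Arc (Sum.inl (hi a)) (Sum.inl (lo b)) w ∧ w ≤ 0) :
    ¬ ∃ σ : ℕ → Fin n → ℤ, ∀ (k : ℕ) (u v : Fin n ⊕ Fin n) (w : ℤ),
      Arc u v w →
        Sum.elim (σ k) (σ (k + 1)) v ≤ Sum.elim (σ k) (σ (k + 1)) u + w := by
  rintro ⟨σ, hσ⟩
  have hwFnp : ∀ k, wF k ≤ 0 := by
    intro k; rcases (hF k).2 with h | h <;> omega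
  have hwBnp : ∀ k, wB k ≤ 0 := by
    intro k; rcases (hB k).2 with h | h <;> omega
  set A := σ 0 (hi a) with hA
  set B := σ 0 (lo b) with hB0
  set m : ℕ := (A - B).toNat + 1 with hm
  set T : ℕ := m * (s₁ * s₂) with hT
  -- down thread
  have down : ∀ t, σ t (hi (a + t)) ≤ A + ∑ j ∈ Finset.range t, wF (a + j) := by
    intro t
    induction t with
    | zero => simp [hA]
    | succ t ih =>
      have step := hσ t (Sum.inl (hi (a + t))) (Sum.inr (hi (a + t + 1))) (wF (a + t))
        (hF (a + t)).1
      simp only [Sum.elim_inl, Sum.elim_inr] at step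
      rw [Finset.sum_range_succ]
      have : a + (t + 1) = a + t + 1 := by omega
      rw [this]
      linarith
  -- up thread
  have up : ∀ t, t ≤ T →
      σ (T - t) (lo (b + t)) ≤ σ T (lo b) + ∑ j ∈ Finset.range t, wB (b + j) := by
    intro t
    induction t with
    | zero => simp
    | succ t ih =>
      intro hle
      have ih' := ih (by omega)
      have step := hσ (T - (t + 1)) (Sum.inr (lo (b + t))) (Sum.inl (lo (b + t + 1)))
        (wB (b + t)) (hB (b + t)).1
      simp only [Sum.elim_inl, Sum.elim_inr] at step
      have heq : T - (t + 1) + 1 = T - t := by omega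
      rw [heq] at step
      rw [Finset.sum_range_succ]
      have : b + (t + 1) = b + t + 1 := by omega
      rw [this]
      linarith
  -- periodicity of indices
  have hiT : hi (a + T) = hi a := by
    have : T = (m * s₂) * s₁ := by rw [hT]; ring
    rw [this]; exact per_mul hi s₁ hper (m * s₂) a
  have loT : lo (b + T) = lo b := by
    have : T = (m * s₁) * s₂ := by rw [hT]; ring
    rw [this]; exact per_mul lo s₂ lper (m * s₁) b
  -- arc at time T
  obtain ⟨w, hw, hw0⟩ := harc
  have harcT := hσ T (Sum.inl (hi a)) (Sum.inl (lo b)) w hw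
  simp only [Sum.elim_inl] at harcT
  -- combine
  have hdownT := down T
  rw [hiT] at hdownT
  have hupT := up T le_rfl
  rw [Nat.sub_self, loT] at hupT
  -- sum bounds
  have hstrsum : ∑ j ∈ Finset.range T, wF (a + j) + ∑ j ∈ Finset.range T, wB (b + j)
      ≤ -(m : ℤ) := by
    rcases hstrict with h | h
    · have hSF : ∑ j ∈ Finset.range T, wF (a + j) ≤ -(m : ℤ) := by
        have hT' : T = (m * s₂) * s₁ := by rw [hT]; ring
        rw [hT']
        have h1 := sum_blocks wF s₁ hs₁ wFper hwFnp h (m * s₂) a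
        have h2 : (m : ℤ) ≤ ((m * s₂ : ℕ) : ℤ) := by
          exact_mod_cast Nat.le_mul_of_pos_right m hs₂
        linarith
      have hSB : ∑ j ∈ Finset.range T, wB (b + j) ≤ 0 :=
        Finset.sum_nonpos (fun j _ => hwBnp (b + j))
      linarith
    · have hSB : ∑ j ∈ Finset.range T, wB (b + j) ≤ -(m : ℤ) := by
        have hT' : T = (m * s₁) * s₂ := by rw [hT]; ring
        rw [hT']
        have h1 := sum_blocks wB s₂ hs₂ wBper hwBnp h (m * s₁) b
        have h2 : (m : ℤ) ≤ ((m * s₁ : ℕ) : ℤ) := by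
          exact_mod_cast Nat.le_mul_of_pos_right m hs₁
        linarith
      have hSF : ∑ j ∈ Finset.range T, wF (a + j) ≤ 0 :=
        Finset.sum_nonpos (fun j _ => hwFnp (a + j))
      linarith
  -- final contradiction: B ≤ A + SF + SB ≤ A - m, but m ≥ A - B + 1
  have hchain : B ≤ A + ∑ j ∈ Finset.range T, wF (a + j) + ∑ j ∈ Finset.range T, wB (b + j) := by
    linarith
  have hmge : (A - B) ≤ ((A - B).toNat : ℤ) := Int.self_le_toNat _
  have : (m : ℤ) = ((A - B).toNat : ℤ) + 1 := by rw [hm]; push_cast; ring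
  linarith
end

section
/- Let G be an idempotent cyclic monotonicity constraint (consequence-closed, satisfiable) such that G does not entail x_i < x_i' together with x_j > x_j' and x_j ≥ x_i simultaneously for any i, j. Extend G with a fresh variable x₀ constrained by x₀ = x₀', adding x_i > x₀ ∧ x_i' > x₀' whenever G ⊢ x_i < x_i', adding x_i < x₀ ∧ x_i' < x₀' whenever G ⊢ x_i > x_i', and relating any remaining variables above x₀. Then the extended constraint Ĝ remains satisfiable and idempotent. -/
/-- Constraint evaluation for an arc with strictness flag, over variables `V`. -/
def CmpB {V : Type*} (σ τ : V → ℤ) (u v : V ⊕ V) (b : Bool) : Prop :=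
  if b then Sum.elim σ τ v < Sum.elim σ τ u else Sum.elim σ τ v ≤ Sum.elim σ τ u

/-- Satisfaction of a monotonicity constraint over variables `V`. -/
def MCSat {V : Type*} (G : (V ⊕ V) → (V ⊕ V) → Bool → Prop)
    (σ τ : V → ℤ) : Prop :=
  ∀ u v b, G u v b → CmpB σ τ u v b

namespace Stmt18

open Sum

variable {n : ℕ}

/-- strictness as a natural number margin -/
def bn (b : Bool) : ℕ := b.toNat

/-- Entailed margin inequalities over all satisfying pairs: value of `p` plus `d`
is at most value of `q`. -/
def Ent (G : (Fin n ⊕ Fin n) → (Fin n ⊕ Fin n) → Bool → Prop)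
    (d : ℕ) (p q : Fin n ⊕ Fin n) : Prop :=
  ∀ σ τ, MCSat G σ τ → Sum.elim σ τ p + (d : ℤ) ≤ Sum.elim σ τ q

section Basic

variable {G : (Fin n ⊕ Fin n) → (Fin n ⊕ Fin n) → Bool → Prop}

lemma cmpB_iff {V : Type*} (σ τ : V → ℤ) (u v : V ⊕ V) (b : Bool) :
    CmpB σ τ u v b ↔ Sum.elim σ τ v + (bn b : ℤ) ≤ Sum.elim σ τ u := by
  cases b <;> simp [CmpB, bn, Int.add_one_le_iff]

lemma g_ent {u v : Fin n ⊕ Fin n} {b : Bool} (h : G u v b) : Ent G (bn b) v u := by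
  intro σ τ hs
  exact (cmpB_iff σ τ u v b).1 (hs u v b h)

lemma ent_trans {d₁ d₂ : ℕ} {p q r : Fin n ⊕ Fin n}
    (h₁ : Ent G d₁ p q) (h₂ : Ent G d₂ q r) : Ent G (d₁ + d₂) p r := by
  intro σ τ hs
  have := h₁ σ τ hs
  have := h₂ σ τ hs
  push_cast
  omega

lemma ent_mono {d d' : ℕ} {p q : Fin n ⊕ Fin n} (h : Ent G d p q) (hd : d' ≤ d) :
    Ent G d' p q := by
  intro σ τ hs
  have := h σ τ hs
  have : (d' : ℤ) ≤ (d : ℤ) := by exact_mod_cast hd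
  omega

/-- from triple-entailment to pair-entailment, using idempotence -/
lemma entT_to_ent
    (hidem : ∀ u v b,
      (∀ σ τ : Fin n → ℤ, (∃ μ, MCSat G σ μ ∧ MCSat G μ τ) → CmpB σ τ u v b) ↔
      (∀ σ τ, MCSat G σ τ → CmpB σ τ u v b))
    {d : ℕ} {p q : Fin n ⊕ Fin n}
    (h : ∀ σ μ τ, MCSat G σ μ → MCSat G μ τ →
      Sum.elim σ τ p + (d : ℤ) ≤ Sum.elim σ τ q) :
    Ent G (min d 1) p q := by
  rcases Nat.eq_zero_or_pos d with hd | hd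
  · subst hd
    have := (hidem q p false).1 (by
      rintro σ τ ⟨μ, h1, h2⟩
      rw [cmpB_iff]
      simpa [bn] using h σ μ τ h1 h2)
    intro σ τ hs
    have := (cmpB_iff σ τ q p false).1 (this σ τ hs)
    simpa [bn] using this
  · have := (hidem q p true).1 (by
      rintro σ τ ⟨μ, h1, h2⟩
      rw [cmpB_iff]
      have := h σ μ τ h1 h2
      have : (1:ℤ) ≤ (d:ℤ) := by exact_mod_cast hd
      simp only [bn, Bool.toNat_true]
      omega)
    intro σ τ hs
    have h2 := (cmpB_iff σ τ q p true).1 (this σ τ hs)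
    simp only [bn, Bool.toNat_true] at h2 ⊢
    have : (min d 1 : ℤ) ≤ 1 := by
      have : min d 1 ≤ 1 := Nat.min_le_right _ _
      exact_mod_cast this
    omega

end Basic

section Paths

variable (G : (Fin n ⊕ Fin n) → (Fin n ⊕ Fin n) → Bool → Prop)

/-- Nodes in the 3-level composition graph. Level 0 is the first valuation,
level 1 the middle valuation, level 2 the last valuation. -/
abbrev Nd (n : ℕ) := Fin n × ℕ

/-- Edges of the composition graph: each entailed arc of `G` can be
instantiated on two consecutive pairs of a composition triple. -/
inductive Edge : Nd n → Nd n → ℕ → Prop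
  | ss0 {a b d} : Ent G d (inl a) (inl b) → Edge (a,0) (b,0) d
  | ss1 {a b d} : Ent G d (inl a) (inl b) → Edge (a,1) (b,1) d
  | tt1 {a b d} : Ent G d (inr a) (inr b) → Edge (a,1) (b,1) d
  | tt2 {a b d} : Ent G d (inr a) (inr b) → Edge (a,2) (b,2) d
  | st01 {a b d} : Ent G d (inl a) (inr b) → Edge (a,0) (b,1) d
  | st12 {a b d} : Ent G d (inl a) (inr b) → Edge (a,1) (b,2) d
  | ts10 {a b d} : Ent G d (inr a) (inl b) → Edge (a,1) (b,0) d
  | ts21 {a b d} : Ent G d (inr a) (inl b) → Edge (a,2) (b,1) d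

/-- Weighted paths in the composition graph. -/
inductive WPath : Nd n → Nd n → ℕ → Prop
  | refl (x) : WPath x x 0
  | tail {x y z d e} : WPath x y d → Edge G y z e → WPath x z (d + e)

/-- value of a node under a composition triple -/
def trv (σ μ τ : Fin n → ℤ) (x : Nd n) : ℤ :=
  if x.2 = 0 then σ x.1 else if x.2 = 1 then μ x.1 else τ x.1

variable {G}

lemma wpath_cons {x y z : Nd n} {d e : ℕ} (h : Edge G x y d) (hp : WPath G y z e) :
    WPath G x z (d + e) := by
  induction hp with
  | refl => simpa using WPath.tail (WPath.refl x) h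
  | tail hp' he ih =>
    have := WPath.tail ih he
    convert this using 1
    omega

lemma wpath_trans {x y z : Nd n} {d e : ℕ} (h : WPath G x y d) (hp : WPath G y z e) :
    WPath G x z (d + e) := by
  induction hp with
  | refl => simpa using h
  | tail hp' he ih =>
    have := WPath.tail ih he
    convert this using 1
    omega

lemma edge_sound {x y : Nd n} {d : ℕ} (h : Edge G x y d) :
    ∀ σ μ τ, MCSat G σ μ → MCSat G μ τ →
      trv σ μ τ x + (d : ℤ) ≤ trv σ μ τ y := by
  intro σ μ τ h1 h2
  cases h with
  | ss0 he => simpa [trv] using he σ μ h1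
  | ss1 he => simpa [trv] using he μ τ h2
  | tt1 he => simpa [trv] using he σ μ h1
  | tt2 he => simpa [trv] using he μ τ h2
  | st01 he => simpa [trv] using he σ μ h1
  | st12 he => simpa [trv] using he μ τ h2
  | ts10 he => simpa [trv] using he σ μ h1
  | ts21 he => simpa [trv] using he μ τ h2

lemma wpath_sound {x y : Nd n} {d : ℕ} (h : WPath G x y d) :
    ∀ σ μ τ, MCSat G σ μ → MCSat G μ τ →
      trv σ μ τ x + (d : ℤ) ≤ trv σ μ τ y := by
  intro σ μ τ h1 h2
  induction h with
  | refl => simp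
  | tail hp he ih =>
    have := edge_sound he σ μ τ h1 h2
    push_cast
    push_cast at ih
    omega

/-- closing a path between two outer nodes into a pair-level entailment -/
lemma wpath_close
    (hidem : ∀ u v b,
      (∀ σ τ : Fin n → ℤ, (∃ μ, MCSat G σ μ ∧ MCSat G μ τ) → CmpB σ τ u v b) ↔
      (∀ σ τ, MCSat G σ τ → CmpB σ τ u v b))
    {p q : Fin n} {kp kq : ℕ} {d : ℕ} (h : WPath G (p,kp) (q,kq) d)
    (hkp : kp = 0 ∨ kp = 2) (hkq : kq = 0 ∨ kq = 2) :
    Ent G (min d 1) (if kp = 0 then inl p else inr p) (if kq = 0 then inl q else inr q) := by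
  apply entT_to_ent hidem
  intro σ μ τ h1 h2
  have hs := wpath_sound h σ μ τ h1 h2
  rcases hkp with h0 | h0 <;> rcases hkq with h3 | h3 <;>
    subst h0 <;> subst h3 <;> simpa [trv] using hs

end Paths

section BelDef

variable (G : (Fin n ⊕ Fin n) → (Fin n ⊕ Fin n) → Bool → Prop)

/-- `G` entails that variable `j` strictly decreases. -/
def Dec (j : Fin n) : Prop := Ent G 1 (inr j) (inl j)

/-- `G` entails that variable `i` strictly increases. -/
def Inc (i : Fin n) : Prop := Ent G 1 (inl i) (inr i)

/-- variable `i` must live below the fresh variable x₀ -/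
def BelV (i : Fin n) : Prop :=
  ∃ j k k' d, Dec G j ∧ k < 3 ∧ k' < 3 ∧ WPath G (i,k) (j,k') d

/-- variables forced to be strictly above x₀ -/
inductive SAb' : Fin n → Prop
  | inc {i₀ k k' d i} : Inc G i₀ → k < 3 → k' < 3 → WPath G (i₀,k) (i,k') d → SAb' i
  | mar {w k' d i} : ¬ BelV G w → 1 ≤ d → k' < 3 → WPath G (w,1) (i,k') d → SAb' i
  | ext {w k' d i} : SAb' w → k' < 3 → WPath G (w,1) (i,k') d → SAb' i

variable {G}

/-- normalize the end of a path to the level-0 copy of a decreasing variable. -/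
lemma nend {x : Nd n} {j : Fin n} {k' d : ℕ} (hj : Dec G j) (hk : k' < 3)
    (h : WPath G x (j,k') d) : ∃ d', d ≤ d' ∧ WPath G x (j,0) d' := by
  interval_cases k'
  · exact ⟨d, le_refl _, h⟩
  · exact ⟨d + 1, by omega, h.tail (Edge.ts10 hj)⟩
  · exact ⟨d + 1 + 1, by omega, (h.tail (Edge.ts21 hj)).tail (Edge.ts10 hj)⟩

/-- absorption: anything path-below the middle copy of a below-variable is below. -/
lemma bel_absorb1 {x : Nd n} {m : Fin n} {d : ℕ}
    (hidem : ∀ u v b,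
      (∀ σ τ : Fin n → ℤ, (∃ μ, MCSat G σ μ ∧ MCSat G μ τ) → CmpB σ τ u v b) ↔
      (∀ σ τ, MCSat G σ τ → CmpB σ τ u v b))
    (hx : x.2 < 3) (h : WPath G x (m,1) d) (hb : BelV G m) : BelV G x.1 := by
  obtain ⟨j, k, k', d₀, hj, hk, hk', hw⟩ := hb
  obtain ⟨d₁, _, hw0⟩ := nend hj hk' hw
  interval_cases k
  · -- witness starts at (m,0): close it, reinstantiate at level 1
    have hcl := wpath_close hidem hw0 (Or.inl rfl) (Or.inl rfl)
    simp only [if_pos rfl] at hcl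
    exact ⟨j, x.2, 1, _, hj, hx, by omega, h.tail (Edge.ss1 hcl)⟩
  · -- witness starts at (m,1): concatenate
    exact ⟨j, x.2, 0, _, hj, hx, by omega, wpath_trans h hw0⟩
  · -- witness starts at (m,2): close it, reinstantiate at level 1 → 0
    have hcl := wpath_close hidem hw0 (Or.inr rfl) (Or.inl rfl)
    simp only [if_neg (by omega : ¬ (2:ℕ) = 0), if_pos rfl] at hcl
    exact ⟨j, x.2, 0, _, hj, hx, by omega, h.tail (Edge.ts10 hcl)⟩

/-- the variable of a position -/
def varOf : Fin n ⊕ Fin n → Fin n := Sum.elim id id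

/-- downward closure of `BelV` along entailed arcs (any coordinates). -/
lemma bel_arc {x y : Fin n ⊕ Fin n} {d : ℕ}
    (hidem : ∀ u v b,
      (∀ σ τ : Fin n → ℤ, (∃ μ, MCSat G σ μ ∧ MCSat G μ τ) → CmpB σ τ u v b) ↔
      (∀ σ τ, MCSat G σ τ → CmpB σ τ u v b))
    (he : Ent G d x y) (hb : BelV G (varOf y)) : BelV G (varOf x) := by
  rcases x with a | a <;> rcases y with b | b
  · exact bel_absorb1 hidem (by norm_num)
      ((WPath.refl (n := n) (a,1)).tail (Edge.ss1 he)) hb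
  · exact bel_absorb1 hidem (by norm_num)
      ((WPath.refl (n := n) (a,0)).tail (Edge.st01 he)) hb
  · exact bel_absorb1 hidem (by norm_num)
      ((WPath.refl (n := n) (a,2)).tail (Edge.ts21 he)) hb
  · exact bel_absorb1 hidem (by norm_num)
      ((WPath.refl (n := n) (a,1)).tail (Edge.tt1 he)) hb

/-- normalize the start of a path at an increasing variable to level 0. -/
lemma nstart {i : Fin n} {y : Nd n} {k d : ℕ} (hi : Inc G i) (hk : k < 3)
    (h : WPath G (i,k) y d) : ∃ d', WPath G (i,0) y d' := by
  interval_cases k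
  · exact ⟨d, h⟩
  · exact ⟨_, wpath_cons (Edge.st01 hi) h⟩
  · exact ⟨_, wpath_cons (Edge.st01 hi) (wpath_cons (Edge.st12 hi) h)⟩

/-- An increasing variable is never below x₀. -/
lemma inc_not_belv {i : Fin n}
    (hidem : ∀ u v b,
      (∀ σ τ : Fin n → ℤ, (∃ μ, MCSat G σ μ ∧ MCSat G μ τ) → CmpB σ τ u v b) ↔
      (∀ σ τ, MCSat G σ τ → CmpB σ τ u v b))
    (hLTT1fail : ¬ ∃ i j : Fin n,
      (∀ σ τ, MCSat G σ τ → σ i < τ i) ∧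
      (∀ σ τ, MCSat G σ τ → τ j < σ j) ∧
      ((∀ σ τ, MCSat G σ τ → σ i ≤ σ j) ∨ (∀ σ τ, MCSat G σ τ → τ i ≤ τ j)))
    (hi : Inc G i) (hb : BelV G i) : False := by
  obtain ⟨j, k, k', d, hj, hk, hk', hw⟩ := hb
  obtain ⟨d₁, hw1⟩ := nstart hi hk hw
  obtain ⟨d₂, _, hw2⟩ := nend hj hk' hw1
  have hcl := wpath_close hidem hw2 (Or.inl rfl) (Or.inl rfl)
  simp only [reduceIte] at hcl
  have hcl0 : Ent G 0 (inl i) (inl j) := ent_mono hcl (Nat.zero_le _)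
  exact hLTT1fail ⟨i, j, (by
      intro σ τ hs
      have := hi σ τ hs
      simpa using (by push_cast at this ⊢; omega : Sum.elim σ τ (inl i) < Sum.elim σ τ (inr i))), (by
      intro σ τ hs
      have := hj σ τ hs
      simpa using (by push_cast at this ⊢; omega : Sum.elim σ τ (inr j) < Sum.elim σ τ (inl j))), Or.inl (by
      intro σ τ hs
      have := hcl0 σ τ hs
      simpa using this)⟩

end BelDef

section Scale

variable {V : Type*}

lemma elim_scale (K : ℤ) (σ τ : V → ℤ) (x : V ⊕ V) :
    Sum.elim (fun w => K * σ w) (fun w => K * τ w) x = K * Sum.elim σ τ x := by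
  cases x <;> rfl

lemma cmpb_scale {K : ℤ} (hK : 0 < K) {σ τ : V → ℤ} {u v : V ⊕ V} {b : Bool}
    (h : CmpB σ τ u v b) : CmpB (fun w => K * σ w) (fun w => K * τ w) u v b := by
  cases b <;> simp only [CmpB, if_true, if_false, elim_scale] at h ⊢
  · exact mul_le_mul_of_nonneg_left h (le_of_lt hK)
  · exact mul_lt_mul_of_pos_left h hK

lemma cmpb_unscale {K : ℤ} (hK : 0 < K) {σ τ : V → ℤ} {u v : V ⊕ V} {b : Bool}
    (h : CmpB (fun w => K * σ w) (fun w => K * τ w) u v b) : CmpB σ τ u v b := by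
  cases b <;> simp only [CmpB, if_true, if_false, elim_scale] at h ⊢
  · exact le_of_mul_le_mul_left h hK
  · exact lt_of_mul_lt_mul_left h (le_of_lt hK)

lemma mcsat_scale {K : ℤ} (hK : 0 < K) {Ga : (V ⊕ V) → (V ⊕ V) → Bool → Prop}
    {σ τ : V → ℤ} (h : MCSat Ga σ τ) :
    MCSat Ga (fun w => K * σ w) (fun w => K * τ w) :=
  fun u v b hg => cmpb_scale hK (h u v b hg)

end Scale

section GhatDef

variable (G : (Fin n ⊕ Fin n) → (Fin n ⊕ Fin n) → Bool → Prop)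

/-- the extended monotonicity constraint with fresh variable x₀ = `none` -/
inductive GA : (Option (Fin n) ⊕ Option (Fin n)) → (Option (Fin n) ⊕ Option (Fin n)) → Bool → Prop
  | lift {u v b} : G u v b → GA (Sum.map some some u) (Sum.map some some v) b
  | eqA : GA (inl none) (inr none) false
  | eqB : GA (inr none) (inl none) false
  | belL {i} : BelV G i → GA (inl none) (inl (some i)) true
  | belR {i} : BelV G i → GA (inr none) (inr (some i)) true
  | abvLw {i} : ¬ BelV G i → GA (inl (some i)) (inl none) false
  | abvRw {i} : ¬ BelV G i → GA (inr (some i)) (inr none) false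
  | abvLs {i} : ¬ BelV G i → SAb' G i → GA (inl (some i)) (inl none) true
  | abvRs {i} : ¬ BelV G i → SAb' G i → GA (inr (some i)) (inr none) true

variable {G}

lemma elim_map (σh τh : Option (Fin n) → ℤ) (x : Fin n ⊕ Fin n) :
    Sum.elim σh τh (Sum.map some some x)
      = Sum.elim (fun i => σh (some i)) (fun i => τh (some i)) x := by
  cases x <;> rfl

lemma ga_restrict {σh τh : Option (Fin n) → ℤ} (h : MCSat (GA G) σh τh) :
    MCSat G (fun i => σh (some i)) (fun i => τh (some i)) := by
  intro u v b hg
  have := h _ _ b (GA.lift hg)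
  cases b <;> simp only [CmpB, if_true, if_false, elim_map] at this ⊢ <;> exact this

lemma ga_eq {σh τh : Option (Fin n) → ℤ} (h : MCSat (GA G) σh τh) :
    σh none = τh none := by
  have h1 := h _ _ _ GA.eqA
  have h2 := h _ _ _ GA.eqB
  simp [CmpB] at h1 h2
  omega

lemma ga_trans
    (hidem : ∀ u v b,
      (∀ σ τ : Fin n → ℤ, (∃ μ, MCSat G σ μ ∧ MCSat G μ τ) → CmpB σ τ u v b) ↔
      (∀ σ τ, MCSat G σ τ → CmpB σ τ u v b))
    {σh μh τh : Option (Fin n) → ℤ}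
    (h1 : MCSat (GA G) σh μh) (h2 : MCSat (GA G) μh τh) :
    MCSat (GA G) σh τh := by
  intro u v b harc
  cases harc with
  | lift hg =>
    have hmid := (hidem _ _ b).2 (fun σ τ hs => hs _ _ b hg)
      _ _ ⟨_, ga_restrict h1, ga_restrict h2⟩
    cases b <;> simp only [CmpB, if_true, if_false, elim_map] at hmid ⊢ <;> exact hmid
  | eqA =>
    have e1 := ga_eq h1
    have e2 := ga_eq h2
    simp [CmpB]
    omega
  | eqB =>
    have e1 := ga_eq h1
    have e2 := ga_eq h2
    simp [CmpB]
    omega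
  | belL hb => simpa [CmpB] using h1 _ _ _ (GA.belL hb)
  | belR hb => simpa [CmpB] using h2 _ _ _ (GA.belR hb)
  | abvLw hb => simpa [CmpB] using h1 _ _ _ (GA.abvLw hb)
  | abvRw hb => simpa [CmpB] using h2 _ _ _ (GA.abvRw hb)
  | abvLs hb hsab => simpa [CmpB] using h1 _ _ _ (GA.abvLs hb hsab)
  | abvRs hb hsab => simpa [CmpB] using h2 _ _ _ (GA.abvRs hb hsab)

end GhatDef

section SatModel

variable {G : (Fin n ⊕ Fin n) → (Fin n ⊕ Fin n) → Bool → Prop}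

open Classical in
/-- the canonical model of the extension: below-variables are shifted down. -/
noncomputable def hval (σ₀ τ₀ : Fin n → ℤ) (Mb : ℤ)
    (G : (Fin n ⊕ Fin n) → (Fin n ⊕ Fin n) → Bool → Prop) (p : Fin n ⊕ Fin n) : ℤ :=
  (if BelV G (varOf p) then 0 else (2*Mb+2)) + Sum.elim σ₀ τ₀ p

open Classical in
lemma ga_sat
    (hidem : ∀ u v b,
      (∀ σ τ : Fin n → ℤ, (∃ μ, MCSat G σ μ ∧ MCSat G μ τ) → CmpB σ τ u v b) ↔
      (∀ σ τ, MCSat G σ τ → CmpB σ τ u v b))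
    {σ₀ τ₀ : Fin n → ℤ} (hs : MCSat G σ₀ τ₀) {Mb : ℤ} (hM0 : 0 ≤ Mb)
    (hM : ∀ p : Fin n ⊕ Fin n, |Sum.elim σ₀ τ₀ p| ≤ Mb) :
    MCSat (GA G)
      (fun w => w.elim (Mb+1) (fun i => hval σ₀ τ₀ Mb G (inl i)))
      (fun w => w.elim (Mb+1) (fun i => hval σ₀ τ₀ Mb G (inr i))) := by
  intro u v b harc
  rw [cmpB_iff]
  have hbn : (bn b : ℤ) ≤ 1 := by cases b <;> simp [bn]
  cases harc with
  | @lift u₀ v₀ b hg =>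
    have hmap : ∀ x : Fin n ⊕ Fin n,
        Sum.elim (fun w : Option (Fin n) => w.elim (Mb+1) (fun i => hval σ₀ τ₀ Mb G (inl i)))
          (fun w => w.elim (Mb+1) (fun i => hval σ₀ τ₀ Mb G (inr i)))
          (Sum.map some some x) = hval σ₀ τ₀ Mb G x := by
      intro x; cases x <;> rfl
    rw [hmap, hmap]
    have hE := g_ent hg σ₀ τ₀ hs
    have hv := hM v₀
    have hu := hM u₀
    by_cases hBv : BelV G (varOf v₀) <;> by_cases hBu : BelV G (varOf u₀)
    · simp only [hval, if_pos hBv, if_pos hBu]; omega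
    · simp only [hval, if_pos hBv, if_neg hBu]
      have := abs_le.1 hv
      have := abs_le.1 hu
      omega
    · exact absurd (bel_arc hidem (g_ent hg) hBu) hBv
    · simp only [hval, if_neg hBv, if_neg hBu]; omega
  | eqA => simp [bn]
  | eqB => simp [bn]
  | @belL i hb =>
    have h2 := abs_le.1 (hM (inl i))
    simp only [Sum.elim_inl] at h2
    simp [hval, varOf, bn, hb]
    omega
  | @belR i hb =>
    have h2 := abs_le.1 (hM (inr i))
    simp only [Sum.elim_inr] at h2
    simp [hval, varOf, bn, hb]
    omega
  | @abvLw i hb =>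
    have h2 := abs_le.1 (hM (inl i))
    simp only [Sum.elim_inl] at h2
    simp [hval, varOf, bn, hb]
    omega
  | @abvRw i hb =>
    have h2 := abs_le.1 (hM (inr i))
    simp only [Sum.elim_inr] at h2
    simp [hval, varOf, bn, hb]
    omega
  | @abvLs i hb hsab =>
    have h2 := abs_le.1 (hM (inl i))
    simp only [Sum.elim_inl] at h2
    simp [hval, varOf, bn, hb]
    omega
  | @abvRs i hb hsab =>
    have h2 := abs_le.1 (hM (inr i))
    simp only [Sum.elim_inr] at h2
    simp [hval, varOf, bn, hb]
    omega

end SatModel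

section Midpoint

open Classical Finset

variable (G : (Fin n ⊕ Fin n) → (Fin n ⊕ Fin n) → Bool → Prop)
variable (σh τh : Option (Fin n) → ℤ) (D0 : ℕ) (K L0 : ℤ)

/-- lower-bound generators for ν from the σ side -/
noncomputable def genD (a : Fin n) : Finset ((Fin n) × ℕ) :=
  (Finset.univ ×ˢ Finset.range (D0+1)).filter (fun pd => WPath G (pd.1,0) (a,1) pd.2)

/-- lower-bound generators for ν from the τ side -/
noncomputable def genDt (a : Fin n) : Finset ((Fin n) × ℕ) :=
  (Finset.univ ×ˢ Finset.range (D0+1)).filter (fun pd => WPath G (pd.1,2) (a,1) pd.2)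

/-- witnesses for margins above x₀ -/
noncomputable def genDe (a : Fin n) : Finset ((Fin n) × ℕ) :=
  (Finset.univ ×ˢ Finset.range (D0+1)).filter
    (fun pd => ¬ BelV G pd.1 ∧ WPath G (pd.1,1) (a,1) pd.2)

/-- witnesses for default margins -/
noncomputable def genDm (a : Fin n) : Finset ((Fin n × ℕ) × ℕ) :=
  ((Finset.univ ×ˢ Finset.range 3) ×ˢ Finset.range (D0+1)).filter
    (fun x => x.1.2 < 3 ∧ WPath G (x.1.1, x.1.2) (a,1) x.2)

/-- margin of a variable above x₀ -/
noncomputable def eA (a : Fin n) : ℕ :=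
  (genDe G D0 a).sup (fun wd => (if SAb' G wd.1 then 1 else 0) + wd.2)

/-- default margin -/
noncomputable def mmA (a : Fin n) : ℕ := (genDm G D0 a).sup (fun x => x.2)

/-- the full generator set for the value of ν at a variable -/
noncomputable def genSet (a : Fin n) : Finset ℤ :=
  ((genD G D0 a).image (fun pd => K * σh (some pd.1) + pd.2)
   ∪ (genDt G D0 a).image (fun pd => K * τh (some pd.1) + pd.2))
   ∪ ((if BelV G a then (∅ : Finset ℤ) else {K * σh none + eA G D0 a})
   ∪ {L0 + mmA G D0 a})

lemma genSet_nonempty (a : Fin n) : (genSet G σh τh D0 K L0 a).Nonempty :=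
  ⟨L0 + mmA G D0 a, by simp [genSet]⟩

/-- the midpoint valuation -/
noncomputable def nuF : Option (Fin n) → ℤ :=
  fun w => w.elim (K * σh none)
    (fun a => (genSet G σh τh D0 K L0 a).max' (genSet_nonempty G σh τh D0 K L0 a))

variable {G σh τh D0 K L0}

section NuLemmas

/-- membership: σ-side generators -/
lemma mem_genD (hD0 : ∀ (x y : Nd n) (d : ℕ), WPath G x y d → d ≤ D0) {p a : Fin n} {d : ℕ} (h : WPath G (p,0) (a,1) d) :
    K * σh (some p) + d ∈ genSet G σh τh D0 K L0 a := by
  have hd : d ≤ D0 := hD0 _ _ _ h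
  refine Finset.mem_union_left _ (Finset.mem_union_left _ ?_)
  exact Finset.mem_image.2 ⟨(p,d), Finset.mem_filter.2
    ⟨Finset.mem_product.2 ⟨Finset.mem_univ _, Finset.mem_range.2 (by omega)⟩, h⟩, rfl⟩

lemma mem_genDt (hD0 : ∀ (x y : Nd n) (d : ℕ), WPath G x y d → d ≤ D0) {q a : Fin n} {d : ℕ} (h : WPath G (q,2) (a,1) d) :
    K * τh (some q) + d ∈ genSet G σh τh D0 K L0 a := by
  have hd : d ≤ D0 := hD0 _ _ _ h
  refine Finset.mem_union_left _ (Finset.mem_union_right _ ?_)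
  exact Finset.mem_image.2 ⟨(q,d), Finset.mem_filter.2
    ⟨Finset.mem_product.2 ⟨Finset.mem_univ _, Finset.mem_range.2 (by omega)⟩, h⟩, rfl⟩

lemma mem_genC {a : Fin n} (hb : ¬ BelV G a) :
    K * σh none + eA G D0 a ∈ genSet G σh τh D0 K L0 a := by
  refine Finset.mem_union_right _ (Finset.mem_union_left _ ?_)
  simp [if_neg hb]

lemma mem_genDefault (a : Fin n) :
    L0 + mmA G D0 a ∈ genSet G σh τh D0 K L0 a := by
  refine Finset.mem_union_right _ (Finset.mem_union_right _ ?_)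
  simp

lemma nu_ge {a : Fin n} {x : ℤ} (h : x ∈ genSet G σh τh D0 K L0 a) :
    x ≤ nuF G σh τh D0 K L0 (some a) :=
  Finset.le_max' _ _ h

lemma nu_le {a : Fin n} {B : ℤ} (h : ∀ x ∈ genSet G σh τh D0 K L0 a, x ≤ B) :
    nuF G σh τh D0 K L0 (some a) ≤ B :=
  Finset.max'_le _ (genSet_nonempty G σh τh D0 K L0 a) _ h

/-- destructuring membership in the generator set -/
lemma genSet_cases {a : Fin n} {x : ℤ} (h : x ∈ genSet G σh τh D0 K L0 a) :
    (∃ p d, WPath G (p,0) (a,1) d ∧ x = K * σh (some p) + d) ∨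
    (∃ q d, WPath G (q,2) (a,1) d ∧ x = K * τh (some q) + d) ∨
    (¬ BelV G a ∧ x = K * σh none + eA G D0 a) ∨
    (x = L0 + mmA G D0 a) := by
  simp only [genSet, Finset.mem_union] at h
  rcases h with (h | h) | (h | h)
  · obtain ⟨⟨p,d⟩, hmem, hx⟩ := Finset.mem_image.1 h
    exact Or.inl ⟨p, d, (Finset.mem_filter.1 hmem).2, hx.symm⟩
  · obtain ⟨⟨q,d⟩, hmem, hx⟩ := Finset.mem_image.1 h
    exact Or.inr (Or.inl ⟨q, d, (Finset.mem_filter.1 hmem).2, hx.symm⟩)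
  · by_cases hb : BelV G a
    · simp [if_pos hb] at h
    · simp only [if_neg hb, Finset.mem_singleton] at h
      exact Or.inr (Or.inr (Or.inl ⟨hb, h⟩))
  · simp only [Finset.mem_singleton] at h
    exact Or.inr (Or.inr (Or.inr h))

lemma eA_ge (hD0 : ∀ (x y : Nd n) (d : ℕ), WPath G x y d → d ≤ D0) {w a : Fin n} {d : ℕ} (hw : ¬ BelV G w) (h : WPath G (w,1) (a,1) d) :
    (if SAb' G w then 1 else 0) + d ≤ eA G D0 a := by
  have hd : d ≤ D0 := hD0 _ _ _ h
  unfold eA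
  exact Finset.le_sup (f := fun wd : Fin n × ℕ => (if SAb' G wd.1 then 1 else 0) + wd.2)
    (b := (w,d)) (Finset.mem_filter.2
    ⟨Finset.mem_product.2 ⟨Finset.mem_univ _, Finset.mem_range.2 (by omega)⟩, hw, h⟩)

lemma eA_le (a : Fin n) : eA G D0 a ≤ D0 + 1 := by
  apply Finset.sup_le
  intro wd hmem
  have := (Finset.mem_filter.1 hmem).1
  have := Finset.mem_range.1 (Finset.mem_product.1 this).2
  split <;> omega

lemma eA_self (hD0 : ∀ (x y : Nd n) (d : ℕ), WPath G x y d → d ≤ D0) {a : Fin n} (hb : ¬ BelV G a) (hs : SAb' G a) : 1 ≤ eA G D0 a := by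
  have := eA_ge hD0 hb (WPath.refl (n := n) (a,1))
  rw [if_pos hs] at this
  omega

lemma eA_wit {a : Fin n} (hb : ¬ BelV G a) :
    ∃ w d, ¬ BelV G w ∧ WPath G (w,1) (a,1) d ∧
      eA G D0 a = (if SAb' G w then 1 else 0) + d := by
  have hne : (genDe G D0 a).Nonempty := ⟨(a,0), Finset.mem_filter.2
    ⟨Finset.mem_product.2 ⟨Finset.mem_univ _, Finset.mem_range.2 (by omega)⟩,
     hb, WPath.refl _⟩⟩
  obtain ⟨⟨w,d⟩, hmem, hval⟩ := Finset.exists_mem_eq_sup _ hne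
    (fun wd : Fin n × ℕ => (if SAb' G wd.1 then 1 else 0) + wd.2)
  obtain ⟨-, hw, hp⟩ := Finset.mem_filter.1 hmem
  exact ⟨w, d, hw, hp, hval⟩

lemma mmA_ge (hD0 : ∀ (x y : Nd n) (d : ℕ), WPath G x y d → d ≤ D0) {w a : Fin n} {k d : ℕ} (hk : k < 3) (h : WPath G (w,k) (a,1) d) :
    d ≤ mmA G D0 a := by
  have hd : d ≤ D0 := hD0 _ _ _ h
  unfold mmA
  exact Finset.le_sup (f := fun x : (Fin n × ℕ) × ℕ => x.2)
    (b := ((w,k),d)) (Finset.mem_filter.2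
    ⟨Finset.mem_product.2 ⟨Finset.mem_product.2 ⟨Finset.mem_univ _, Finset.mem_range.2 hk⟩,
      Finset.mem_range.2 (by omega)⟩, hk, h⟩)

lemma mmA_le (a : Fin n) : mmA G D0 a ≤ D0 := by
  apply Finset.sup_le
  intro x hmem
  have := (Finset.mem_filter.1 hmem).1
  have := Finset.mem_range.1 (Finset.mem_product.1 this).2
  omega

lemma mmA_wit (a : Fin n) :
    ∃ w k d, k < 3 ∧ WPath G (w,k) (a,1) d ∧ mmA G D0 a = d := by
  have hne : (genDm G D0 a).Nonempty := ⟨((a,1),0), Finset.mem_filter.2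
    ⟨Finset.mem_product.2 ⟨Finset.mem_product.2 ⟨Finset.mem_univ _, Finset.mem_range.2 (by norm_num)⟩,
      Finset.mem_range.2 (by norm_num)⟩, by norm_num, WPath.refl _⟩⟩
  obtain ⟨⟨⟨w,k⟩,d⟩, hmem, hval⟩ := Finset.exists_mem_eq_sup _ hne
    (fun x : (Fin n × ℕ) × ℕ => x.2)
  obtain ⟨-, hk, hp⟩ := Finset.mem_filter.1 hmem
  exact ⟨w, k, d, hk, hp, hval⟩

end NuLemmas

end Midpoint

section MidVerify

open Classical

variable {G : (Fin n ⊕ Fin n) → (Fin n ⊕ Fin n) → Bool → Prop}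
variable {σh τh : Option (Fin n) → ℤ} {D0 : ℕ} {K L0 Mh : ℤ}

/-- scaling a (possibly strict) inequality -/
lemma scale_step (hK0 : 0 < K) {x y : ℤ} {d : ℕ} (hd : (d:ℤ) ≤ K)
    (hxy : x + ((min d 1 : ℕ) : ℤ) ≤ y) : K * x + d ≤ K * y := by
  rcases Nat.eq_zero_or_pos d with h0 | h0
  · subst h0
    have hxy' : x ≤ y := by simpa using hxy
    have := mul_le_mul_of_nonneg_left hxy' (le_of_lt hK0)
    simpa using this
  · have hmin : min d 1 = 1 := by omega
    rw [hmin] at hxy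
    push_cast at hxy
    nlinarith

lemma scale_mono (hK0 : 0 < K) {x y : ℤ} (hxy : x ≤ y) : K * x ≤ K * y :=
  mul_le_mul_of_nonneg_left hxy (le_of_lt hK0)

section WithPair

variable
  (hidem : ∀ u v b,
      (∀ σ τ : Fin n → ℤ, (∃ μ, MCSat G σ μ ∧ MCSat G μ τ) → CmpB σ τ u v b) ↔
      (∀ σ τ, MCSat G σ τ → CmpB σ τ u v b))
  (hst : MCSat (GA G) σh τh)
  (hD0 : ∀ (x y : Nd n) (d : ℕ), WPath G x y d → d ≤ D0)
  (hMh : ∀ w, |σh w| ≤ Mh ∧ |τh w| ≤ Mh)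
  (hK : K = (D0:ℤ) + 2)
  (hL0 : L0 = -(K*(Mh+1)) - 2*(D0:ℤ) - 2)

include hst


/-- rules satisfied by the given pair -/
lemma rule_belL {i : Fin n} (hb : BelV G i) : σh (some i) + 1 ≤ σh none := by
  have := hst _ _ _ (GA.belL hb)
  simp only [CmpB, if_true, Sum.elim_inl] at this
  omega

lemma rule_belR {i : Fin n} (hb : BelV G i) : τh (some i) + 1 ≤ τh none := by
  have := hst _ _ _ (GA.belR hb)
  simp only [CmpB, if_true, Sum.elim_inr] at this
  omega

lemma rule_abvL {i : Fin n} (hb : ¬ BelV G i) : σh none ≤ σh (some i) := by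
  have := hst _ _ _ (GA.abvLw hb)
  simpa [CmpB] using this

lemma rule_abvR {i : Fin n} (hb : ¬ BelV G i) : τh none ≤ τh (some i) := by
  have := hst _ _ _ (GA.abvRw hb)
  simpa [CmpB] using this

lemma rule_abvLs {i : Fin n} (hb : ¬ BelV G i) (hs : SAb' G i) :
    σh none + 1 ≤ σh (some i) := by
  have := hst _ _ _ (GA.abvLs hb hs)
  simp only [CmpB, if_true, Sum.elim_inl] at this
  omega

lemma rule_abvRs {i : Fin n} (hb : ¬ BelV G i) (hs : SAb' G i) :
    τh none + 1 ≤ τh (some i) := by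
  have := hst _ _ _ (GA.abvRs hb hs)
  simp only [CmpB, if_true, Sum.elim_inr] at this
  omega

include hidem hD0 hK in
/-- transfer of closed paths to the (scaled) actual values -/
lemma act00 {p q : Fin n} {d : ℕ} (h : WPath G (p,0) (q,0) d) :
    K * σh (some p) + d ≤ K * σh (some q) := by
  have hcl := wpath_close hidem h (Or.inl rfl) (Or.inl rfl)
  simp only [reduceIte] at hcl
  have h2 := hcl _ _ (ga_restrict hst)
  simp only [Sum.elim_inl] at h2
  exact scale_step (by omega) (by have := hD0 _ _ _ h; omega) h2

include hidem hD0 hK in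
lemma act02 {p q : Fin n} {d : ℕ} (h : WPath G (p,0) (q,2) d) :
    K * σh (some p) + d ≤ K * τh (some q) := by
  have hcl := wpath_close hidem h (Or.inl rfl) (Or.inr rfl)
  simp only [reduceIte] at hcl
  have h2 := hcl _ _ (ga_restrict hst)
  simp only [Sum.elim_inl, Sum.elim_inr] at h2
  exact scale_step (by omega) (by have := hD0 _ _ _ h; omega) h2

include hidem hD0 hK in
lemma act20 {p q : Fin n} {d : ℕ} (h : WPath G (p,2) (q,0) d) :
    K * τh (some p) + d ≤ K * σh (some q) := by
  have hcl := wpath_close hidem h (Or.inr rfl) (Or.inl rfl)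
  simp only [reduceIte] at hcl
  have h2 := hcl _ _ (ga_restrict hst)
  simp only [Sum.elim_inl, Sum.elim_inr] at h2
  exact scale_step (by omega) (by have := hD0 _ _ _ h; omega) h2

include hidem hD0 hK in
lemma act22 {p q : Fin n} {d : ℕ} (h : WPath G (p,2) (q,2) d) :
    K * τh (some p) + d ≤ K * τh (some q) := by
  have hcl := wpath_close hidem h (Or.inr rfl) (Or.inr rfl)
  simp only [if_neg (by omega : ¬ (2:ℕ) = 0)] at hcl
  have h2 := hcl _ _ (ga_restrict hst)
  simp only [Sum.elim_inr] at h2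
  exact scale_step (by omega) (by have := hD0 _ _ _ h; omega) h2

include hidem hst hD0 hK hMh hL0 in
/-- upper bounds on ν against the σ-side actual values -/
lemma nu_up_sigma {m q : Fin n} {e : ℕ} (hee : e ≤ 1) (he : Ent G e (inr m) (inl q)) :
    nuF G σh τh D0 K L0 (some m) + e ≤ K * σh (some q) := by
  have hK0 : (0:ℤ) < K := by omega
  have key : nuF G σh τh D0 K L0 (some m) ≤ K * σh (some q) - e := by
    apply nu_le
    intro x hx
    rcases genSet_cases hx with ⟨p,d,hp,hxv⟩ | ⟨p,d,hp,hxv⟩ | ⟨hbm,hxv⟩ | hxv <;> subst hxv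
    · have h2 := act00 hidem hst hD0 hK (hp.tail (Edge.ts10 he))
      push_cast at h2 ⊢
      linarith
    · have h2 := act20 hidem hst hD0 hK (hp.tail (Edge.ts10 he))
      push_cast at h2 ⊢
      linarith
    · have hqnb : ¬ BelV G q := fun hbq => hbm (bel_arc hidem he hbq)
      obtain ⟨w, d0, hw, hpw, heq⟩ := eA_wit (D0 := D0) hbm
      have hpq : WPath G (w,1) (q,0) (d0 + e) := hpw.tail (Edge.ts10 he)
      by_cases hz : (if SAb' G w then 1 else 0) + d0 + e = 0
      · have h2 := scale_mono hK0 (rule_abvL hst hqnb)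
        rw [heq]
        have hflag : (if SAb' G w then 1 else 0) = 0 := by omega
        rw [hflag]
        push_cast
        omega
      · have hsq : SAb' G q := by
          by_cases hsw : SAb' G w
          · exact SAb'.ext hsw (by norm_num) hpq
          · refine SAb'.mar hw ?_ (by norm_num) hpq
            simp only [hsw, if_false] at hz
            omega
        have h3 : K * (σh none) + K ≤ K * σh (some q) := by
          have := rule_abvLs hst hqnb hsq
          nlinarith
        have h4 : ((eA G D0 m : ℕ) : ℤ) ≤ (D0:ℤ) + 1 := by exact_mod_cast eA_le m
        have he1 : (e:ℤ) ≤ 1 := by exact_mod_cast hee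
        omega
    · have h4 : ((mmA G D0 m : ℕ) : ℤ) ≤ (D0:ℤ) := by exact_mod_cast mmA_le m
      have h5 : -Mh ≤ σh (some q) := by
        have := abs_le.1 (hMh (some q)).1
        omega
      have h6 := scale_mono hK0 h5
      have h7 : K * (-Mh) = -(K*(Mh+1)) + K := by ring
      rw [h7] at h6
      have he1 : (e:ℤ) ≤ 1 := by exact_mod_cast hee
      omega
  omega

include hidem hst hD0 hK hMh hL0 in
/-- upper bounds on ν against the τ-side actual values -/
lemma nu_up_tau {m q : Fin n} {e : ℕ} (hee : e ≤ 1) (he : Ent G e (inl m) (inr q)) :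
    nuF G σh τh D0 K L0 (some m) + e ≤ K * τh (some q) := by
  have hK0 : (0:ℤ) < K := by omega
  have key : nuF G σh τh D0 K L0 (some m) ≤ K * τh (some q) - e := by
    apply nu_le
    intro x hx
    rcases genSet_cases hx with ⟨p,d,hp,hxv⟩ | ⟨p,d,hp,hxv⟩ | ⟨hbm,hxv⟩ | hxv <;> subst hxv
    · have h2 := act02 hidem hst hD0 hK (hp.tail (Edge.st12 he))
      push_cast at h2 ⊢
      linarith
    · have h2 := act22 hidem hst hD0 hK (hp.tail (Edge.st12 he))
      push_cast at h2 ⊢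
      linarith
    · have hqnb : ¬ BelV G q := fun hbq => hbm (bel_arc hidem he hbq)
      obtain ⟨w, d0, hw, hpw, heq⟩ := eA_wit (D0 := D0) hbm
      have hpq : WPath G (w,1) (q,2) (d0 + e) := hpw.tail (Edge.st12 he)
      by_cases hz : (if SAb' G w then 1 else 0) + d0 + e = 0
      · have h2 := scale_mono hK0 (rule_abvR hst hqnb)
        rw [heq]
        have hflag : (if SAb' G w then 1 else 0) = 0 := by omega
        rw [hflag]
        have hceq : σh none = τh none := ga_eq hst
        rw [hceq]
        push_cast
        omega
      · have hsq : SAb' G q := by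
          by_cases hsw : SAb' G w
          · exact SAb'.ext hsw (by norm_num) hpq
          · refine SAb'.mar hw ?_ (by norm_num) hpq
            simp only [hsw, if_false] at hz
            omega
        have h3 : K * (τh none) + K ≤ K * τh (some q) := by
          have := rule_abvRs hst hqnb hsq
          nlinarith
        have h4 : ((eA G D0 m : ℕ) : ℤ) ≤ (D0:ℤ) + 1 := by exact_mod_cast eA_le m
        have hceq : σh none = τh none := ga_eq hst
        rw [hceq]
        have he1 : (e:ℤ) ≤ 1 := by exact_mod_cast hee
        omega
    · have h4 : ((mmA G D0 m : ℕ) : ℤ) ≤ (D0:ℤ) := by exact_mod_cast mmA_le m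
      have h5 : -Mh ≤ τh (some q) := by
        have := abs_le.1 (hMh (some q)).2
        omega
      have h6 := scale_mono hK0 h5
      have h7 : K * (-Mh) = -(K*(Mh+1)) + K := by ring
      rw [h7] at h6
      have he1 : (e:ℤ) ≤ 1 := by exact_mod_cast hee
      omega
  omega

include hidem hst hD0 hK hMh hL0 in
/-- upper bounds on ν for variables below x₀ -/
lemma nu_up_c {m : Fin n} (hb : BelV G m) :
    nuF G σh τh D0 K L0 (some m) + 1 ≤ K * σh none := by
  have hK0 : (0:ℤ) < K := by omega
  have key : nuF G σh τh D0 K L0 (some m) ≤ K * σh none - 1 := by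
    apply nu_le
    intro x hx
    rcases genSet_cases hx with ⟨p,d,hp,hxv⟩ | ⟨p,d,hp,hxv⟩ | ⟨hbm,hxv⟩ | hxv <;> subst hxv
    · have hbp : BelV G p := bel_absorb1 hidem (by norm_num) hp hb
      have h2 : K * σh (some p) + K ≤ K * σh none := by
        have := rule_belL hst hbp
        nlinarith
      have hd : d ≤ D0 := hD0 _ _ _ hp
      push_cast
      omega
    · have hbp : BelV G p := bel_absorb1 hidem (by norm_num) hp hb
      have h2 : K * τh (some p) + K ≤ K * σh none := by
        have h3 := rule_belR hst hbp
        have hceq : σh none = τh none := ga_eq hst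
        rw [hceq]
        nlinarith
      have hd : d ≤ D0 := hD0 _ _ _ hp
      push_cast
      omega
    · exact absurd hb hbm
    · have h4 : ((mmA G D0 m : ℕ) : ℤ) ≤ (D0:ℤ) := by exact_mod_cast mmA_le m
      have h5 : -Mh ≤ σh none := by
        have := abs_le.1 (hMh none).1
        omega
      have h6 := scale_mono hK0 h5
      have h7 : K * (-Mh) = -(K*(Mh+1)) + K := by ring
      rw [h7] at h6
      omega
  omega

include hidem hst hD0 in
/-- internal transfer between ν-values along middle edges -/
lemma nu_internal {m m' : Fin n} {e : ℕ} (hedge : Edge G (m,1) (m',1) e) :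
    nuF G σh τh D0 K L0 (some m) + e ≤ nuF G σh τh D0 K L0 (some m') := by
  have key : nuF G σh τh D0 K L0 (some m) ≤ nuF G σh τh D0 K L0 (some m') - e := by
    apply nu_le
    intro x hx
    rcases genSet_cases hx with ⟨p,d,hp,hxv⟩ | ⟨p,d,hp,hxv⟩ | ⟨hbm,hxv⟩ | hxv <;> subst hxv
    · have h2 := nu_ge (σh := σh) (τh := τh) (K := K) (L0 := L0) (mem_genD hD0 (hp.tail hedge))
      push_cast at h2 ⊢
      omega
    · have h2 := nu_ge (σh := σh) (τh := τh) (K := K) (L0 := L0) (mem_genDt hD0 (hp.tail hedge))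
      push_cast at h2 ⊢
      omega
    · have hbm' : ¬ BelV G m' := fun hb' => hbm
        (bel_absorb1 hidem (by norm_num) ((WPath.refl (n := n) (m,1)).tail hedge) hb')
      obtain ⟨w, d0, hw, hpw, heq⟩ := eA_wit (D0 := D0) hbm
      have h2 : (if SAb' G w then 1 else 0) + (d0 + e) ≤ eA G D0 m' :=
        eA_ge hD0 hw (hpw.tail hedge)
      have h3 := nu_ge (σh := σh) (τh := τh) (K := K) (L0 := L0)
        (mem_genC (D0 := D0) (a := m') hbm')
      have h4 : eA G D0 m + e ≤ eA G D0 m' := by omega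
      have h4' : ((eA G D0 m : ℕ):ℤ) + (e:ℤ) ≤ ((eA G D0 m' : ℕ):ℤ) := by exact_mod_cast h4
      omega
    · obtain ⟨w, k, d, hk, hpw, heq⟩ := mmA_wit (D0 := D0) m
      have h2 : d + e ≤ mmA G D0 m' := mmA_ge hD0 hk (hpw.tail hedge)
      have h3 := nu_ge (σh := σh) (τh := τh) (K := K) (L0 := L0)
        (mem_genDefault (G := G) (D0 := D0) (a := m'))
      have h4 : mmA G D0 m + e ≤ mmA G D0 m' := by omega
      have h4' : ((mmA G D0 m : ℕ):ℤ) + (e:ℤ) ≤ ((mmA G D0 m' : ℕ):ℤ) := by exact_mod_cast h4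
      omega
  omega

include hD0 in
/-- lower bounds for ν from σ-side arcs -/
lemma nu_lo_sigma {p m : Fin n} {e : ℕ} (he : Ent G e (inl p) (inr m)) :
    K * σh (some p) + e ≤ nuF G σh τh D0 K L0 (some m) := by
  have h2 := nu_ge (σh := σh) (τh := τh) (K := K) (L0 := L0)
    (mem_genD hD0 ((WPath.refl (n := n) (p,0)).tail (Edge.st01 he)))
  simpa using h2

include hD0 in
/-- lower bounds for ν from τ-side arcs -/
lemma nu_lo_tau {q m : Fin n} {e : ℕ} (he : Ent G e (inr q) (inl m)) :
    K * τh (some q) + e ≤ nuF G σh τh D0 K L0 (some m) := by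
  have h2 := nu_ge (σh := σh) (τh := τh) (K := K) (L0 := L0)
    (mem_genDt hD0 ((WPath.refl (n := n) (q,2)).tail (Edge.ts21 he)))
  simpa using h2

/-- lower bound for ν from x₀ for variables not below -/
lemma nu_lo_c {m : Fin n} (hb : ¬ BelV G m) :
    K * σh none + eA G D0 m ≤ nuF G σh τh D0 K L0 (some m) :=
  nu_ge (mem_genC hb)

omit hst in
lemma scale_arc (hK0 : (0:ℤ) < K) {x y : ℤ} {e : ℕ} (hee : e ≤ 1)
    (hxy : x + (e:ℤ) ≤ y) : K * x + (e:ℤ) ≤ K * y := by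
  interval_cases e
  · simpa using mul_le_mul_of_nonneg_left (by simpa using hxy) (le_of_lt hK0)
  · nlinarith

include hidem hst hD0 hK hMh hL0 in
/-- the scaled pair together with ν forms a composition: first pair -/
lemma mid_sat1 :
    MCSat (GA G) (fun w => K * σh w) (nuF G σh τh D0 K L0) := by
  have hK0 : (0:ℤ) < K := by omega
  intro u v b harc
  rw [cmpB_iff]
  have hbn : bn b ≤ 1 := by cases b <;> simp [bn]
  cases harc with
  | @lift u₀ v₀ b hg =>
    have hE := g_ent hg
    rcases v₀ with p | m <;> rcases u₀ with q | m' <;>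
      simp only [Sum.map_inl, Sum.map_inr, Sum.elim_inl, Sum.elim_inr]
    · have h2 := hE _ _ (ga_restrict hst)
      simp only [Sum.elim_inl] at h2
      exact scale_arc hK0 hbn h2
    · exact nu_lo_sigma hst hD0 hE
    · exact nu_up_sigma hidem hst hD0 hMh hK hL0 hbn hE
    · exact nu_internal hidem hst hD0 (Edge.tt1 hE)
  | eqA =>
    simp only [Sum.elim_inl, Sum.elim_inr]
    show nuF G σh τh D0 K L0 none + (bn false : ℤ) ≤ K * σh none
    simp [nuF, bn]
  | eqB =>
    simp only [Sum.elim_inl, Sum.elim_inr]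
    show K * σh none + (bn false : ℤ) ≤ nuF G σh τh D0 K L0 none
    simp [nuF, bn]
  | @belL i hb =>
    simp only [Sum.elim_inl]
    have h3 := rule_belL hst hb
    have h2 : K * σh (some i) + (1:ℤ) ≤ K * σh none := by nlinarith
    simp only [bn, Bool.toNat_true, Nat.cast_one]
    omega
  | @belR i hb =>
    simp only [Sum.elim_inr]
    have h2 := nu_up_c hidem hst hD0 hMh hK hL0 hb
    show nuF G σh τh D0 K L0 (some i) + (bn true : ℤ) ≤ nuF G σh τh D0 K L0 none
    show nuF G σh τh D0 K L0 (some i) + (bn true : ℤ) ≤ K * σh none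
    simpa [bn] using h2
  | @abvLw i hb =>
    simp only [Sum.elim_inl]
    have h2 : K * σh none ≤ K * σh (some i) := scale_mono hK0 (rule_abvL hst hb)
    simp only [bn, Bool.toNat_false, Nat.cast_zero, add_zero]
    omega
  | @abvRw i hb =>
    simp only [Sum.elim_inr]
    have h2 := nu_lo_c (D0 := D0) (K := K) (L0 := L0) hst hb
    show nuF G σh τh D0 K L0 none + (bn false : ℤ) ≤ nuF G σh τh D0 K L0 (some i)
    show K * σh none + (bn false : ℤ) ≤ nuF G σh τh D0 K L0 (some i)
    have : (0:ℤ) ≤ (eA G D0 i : ℤ) := by positivity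
    simp only [bn, Bool.toNat_false, Nat.cast_zero, add_zero]
    omega
  | @abvLs i hb hs =>
    simp only [Sum.elim_inl]
    have h3 := rule_abvLs hst hb hs
    have h2 : K * σh none + (1:ℤ) ≤ K * σh (some i) := by nlinarith
    simp only [bn, Bool.toNat_true, Nat.cast_one]
    omega
  | @abvRs i hb hs =>
    simp only [Sum.elim_inr]
    have h2 := nu_lo_c (D0 := D0) (K := K) (L0 := L0) hst hb
    have h3 : 1 ≤ eA G D0 i := eA_self hD0 hb hs
    show nuF G σh τh D0 K L0 none + (bn true : ℤ) ≤ nuF G σh τh D0 K L0 (some i)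
    show K * σh none + (bn true : ℤ) ≤ nuF G σh τh D0 K L0 (some i)
    have h4 : (1:ℤ) ≤ (eA G D0 i : ℤ) := by exact_mod_cast h3
    simp only [bn, Bool.toNat_true, Nat.cast_one]
    omega

include hidem hst hD0 hK hMh hL0 in
/-- the scaled pair together with ν forms a composition: second pair -/
lemma mid_sat2 :
    MCSat (GA G) (nuF G σh τh D0 K L0) (fun w => K * τh w) := by
  have hK0 : (0:ℤ) < K := by omega
  have hceq : σh none = τh none := ga_eq hst
  intro u v b harc
  rw [cmpB_iff]
  have hbn : bn b ≤ 1 := by cases b <;> simp [bn]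
  cases harc with
  | @lift u₀ v₀ b hg =>
    have hE := g_ent hg
    rcases v₀ with m | q <;> rcases u₀ with m' | q' <;>
      simp only [Sum.map_inl, Sum.map_inr, Sum.elim_inl, Sum.elim_inr]
    · exact nu_internal hidem hst hD0 (Edge.ss1 hE)
    · exact nu_up_tau hidem hst hD0 hMh hK hL0 hbn hE
    · exact nu_lo_tau hst hD0 hE
    · have h2 := hE _ _ (ga_restrict hst)
      simp only [Sum.elim_inr] at h2
      exact scale_arc hK0 hbn h2
  | eqA =>
    simp only [Sum.elim_inl, Sum.elim_inr]
    show K * τh none + (bn false : ℤ) ≤ nuF G σh τh D0 K L0 none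
    show K * τh none + (bn false : ℤ) ≤ K * σh none
    rw [hceq]
    simp [bn]
  | eqB =>
    simp only [Sum.elim_inl, Sum.elim_inr]
    show nuF G σh τh D0 K L0 none + (bn false : ℤ) ≤ K * τh none
    show K * σh none + (bn false : ℤ) ≤ K * τh none
    rw [hceq]
    simp [bn]
  | @belL i hb =>
    simp only [Sum.elim_inl]
    have h2 := nu_up_c hidem hst hD0 hMh hK hL0 hb
    show nuF G σh τh D0 K L0 (some i) + (bn true : ℤ) ≤ nuF G σh τh D0 K L0 none
    show nuF G σh τh D0 K L0 (some i) + (bn true : ℤ) ≤ K * σh none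
    simpa [bn] using h2
  | @belR i hb =>
    simp only [Sum.elim_inr]
    have h3 := rule_belR hst hb
    have h2 : K * τh (some i) + (1:ℤ) ≤ K * τh none := by nlinarith
    simp only [bn, Bool.toNat_true, Nat.cast_one]
    omega
  | @abvLw i hb =>
    simp only [Sum.elim_inl]
    have h2 := nu_lo_c (D0 := D0) (K := K) (L0 := L0) hst hb
    show nuF G σh τh D0 K L0 none + (bn false : ℤ) ≤ nuF G σh τh D0 K L0 (some i)
    show K * σh none + (bn false : ℤ) ≤ nuF G σh τh D0 K L0 (some i)
    have : (0:ℤ) ≤ (eA G D0 i : ℤ) := by positivity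
    simp only [bn, Bool.toNat_false, Nat.cast_zero, add_zero]
    omega
  | @abvRw i hb =>
    simp only [Sum.elim_inr]
    have h2 : K * τh none ≤ K * τh (some i) := scale_mono hK0 (rule_abvR hst hb)
    simp only [bn, Bool.toNat_false, Nat.cast_zero, add_zero]
    omega
  | @abvLs i hb hs =>
    simp only [Sum.elim_inl]
    have h2 := nu_lo_c (D0 := D0) (K := K) (L0 := L0) hst hb
    have h3 : 1 ≤ eA G D0 i := eA_self hD0 hb hs
    show nuF G σh τh D0 K L0 none + (bn true : ℤ) ≤ nuF G σh τh D0 K L0 (some i)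
    show K * σh none + (bn true : ℤ) ≤ nuF G σh τh D0 K L0 (some i)
    have h4 : (1:ℤ) ≤ (eA G D0 i : ℤ) := by exact_mod_cast h3
    simp only [bn, Bool.toNat_true, Nat.cast_one]
    omega
  | @abvRs i hb hs =>
    simp only [Sum.elim_inr]
    have h3 := rule_abvRs hst hb hs
    have h2 : K * τh none + (1:ℤ) ≤ K * τh (some i) := by nlinarith
    simp only [bn, Bool.toNat_true, Nat.cast_one]
    omega

end WithPair

end MidVerify

section Existence

variable {G : (Fin n ⊕ Fin n) → (Fin n ⊕ Fin n) → Bool → Prop}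

lemma exists_triple
    (hidem : ∀ u v b,
      (∀ σ τ : Fin n → ℤ, (∃ μ, MCSat G σ μ ∧ MCSat G μ τ) → CmpB σ τ u v b) ↔
      (∀ σ τ, MCSat G σ τ → CmpB σ τ u v b))
    (hsat : ∃ σ τ, MCSat G σ τ) :
    ∃ t1 t2 t3 : Fin n → ℤ, MCSat G t1 t2 ∧ MCSat G t2 t3 := by
  rcases Nat.eq_zero_or_pos n with hn | hn
  · subst hn
    refine ⟨0, 0, 0, ?_, ?_⟩ <;> intro u v b hg <;>
      rcases u with a | a <;> exact a.elim0
  · obtain ⟨σ0, τ0, hs⟩ := hsat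
    have hR : ¬ (∀ σ τ, MCSat G σ τ → CmpB σ τ (inl ⟨0, hn⟩) (inl ⟨0, hn⟩) true) := by
      intro h
      have := h σ0 τ0 hs
      simp [CmpB] at this
    have hL : ¬ (∀ σ τ : Fin n → ℤ, (∃ μ, MCSat G σ μ ∧ MCSat G μ τ) →
        CmpB σ τ (inl ⟨0, hn⟩) (inl ⟨0, hn⟩) true) :=
      fun hh => hR ((hidem _ _ true).1 hh)
    push_neg at hL
    obtain ⟨σ, τ, ⟨μ, h1, h2⟩, -⟩ := hL
    exact ⟨σ, μ, τ, h1, h2⟩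

lemma exists_abs_bound {α : Type*} [Fintype α] (f : α → ℤ) :
    ∃ M : ℤ, 0 ≤ M ∧ ∀ a, |f a| ≤ M := by
  classical
  refine ⟨((Finset.univ.sup (fun a => (f a).natAbs) : ℕ) : ℤ), by positivity, ?_⟩
  intro a
  have h := Finset.le_sup (f := fun a => (f a).natAbs) (Finset.mem_univ a)
  rw [Int.abs_eq_natAbs]
  exact_mod_cast h

lemma dbound {t1 t2 t3 : Fin n → ℤ} (h12 : MCSat G t1 t2) (h23 : MCSat G t2 t3)
    {M0 : ℤ} (hM : ∀ x : Nd n, |trv t1 t2 t3 x| ≤ M0) :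
    ∀ (x y : Nd n) (d : ℕ), WPath G x y d → d ≤ (2*M0).toNat := by
  intro x y d h
  have hsd := wpath_sound h t1 t2 t3 h12 h23
  have hx := abs_le.1 (hM x)
  have hy := abs_le.1 (hM y)
  omega

end Existence

end Stmt18


open Stmt18

/-- If an idempotent, consequence-closed, satisfiable cyclic MC `G` fails the
local test LTT1, then `G` can be extended with a fresh variable x₀ (`none`),
constrained by x₀ = x₀', with x_i > x₀ added whenever G ⊢ x_i < x_i',
x_i < x₀ added whenever G ⊢ x_i > x_i', and every remaining variable related to
x₀, such that the extension Ghat is still satisfiable and idempotent. -/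
theorem stmt_18 (n : ℕ) (G : (Fin n ⊕ Fin n) → (Fin n ⊕ Fin n) → Bool → Prop)
    (hclosed : ∀ u v b, (∀ σ τ, MCSat G σ τ → CmpB σ τ u v b) → G u v b)
    (hidem : ∀ u v b,
      (∀ σ τ : Fin n → ℤ, (∃ μ, MCSat G σ μ ∧ MCSat G μ τ) → CmpB σ τ u v b) ↔
      (∀ σ τ, MCSat G σ τ → CmpB σ τ u v b))
    (hsat : ∃ σ τ, MCSat G σ τ)
    (hLTT1fail : ¬ ∃ i j : Fin n,
      (∀ σ τ, MCSat G σ τ → σ i < τ i) ∧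
      (∀ σ τ, MCSat G σ τ → τ j < σ j) ∧
      ((∀ σ τ, MCSat G σ τ → σ i ≤ σ j) ∨ (∀ σ τ, MCSat G σ τ → τ i ≤ τ j))) :
    ∃ Ghat : (Option (Fin n) ⊕ Option (Fin n)) → (Option (Fin n) ⊕ Option (Fin n))
        → Bool → Prop,
      -- Ghat extends G
      (∀ u v b, G u v b → Ghat (Sum.map some some u) (Sum.map some some v) b) ∧
      -- x₀ = x₀'
      (∀ σ τ, MCSat Ghat σ τ → σ none = τ none) ∧
      -- x_i > x₀ and x_i' > x₀' whenever G ⊢ x_i < x_i'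
      (∀ i : Fin n, (∀ σ τ, MCSat G σ τ → σ i < τ i) →
        ∀ σ τ : Option (Fin n) → ℤ, MCSat Ghat σ τ →
          σ none < σ (some i) ∧ τ none < τ (some i)) ∧
      -- x_i < x₀ and x_i' < x₀' whenever G ⊢ x_i > x_i'
      (∀ i : Fin n, (∀ σ τ, MCSat G σ τ → τ i < σ i) →
        ∀ σ τ : Option (Fin n) → ℤ, MCSat Ghat σ τ →
          σ (some i) < σ none ∧ τ (some i) < τ none) ∧
      -- every variable is related to x₀
      (∀ i : Fin n,
        (∀ σ τ : Option (Fin n) → ℤ, MCSat Ghat σ τ → σ (some i) ≤ σ none) ∨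
        (∀ σ τ : Option (Fin n) → ℤ, MCSat Ghat σ τ → σ none ≤ σ (some i))) ∧
      -- Ghat remains satisfiable
      (∃ σ τ, MCSat Ghat σ τ) ∧
      -- Ghat remains idempotent
      (∀ u v b,
        (∀ σ τ : Option (Fin n) → ℤ,
          (∃ μ, MCSat Ghat σ μ ∧ MCSat Ghat μ τ) → CmpB σ τ u v b) ↔
        (∀ σ τ, MCSat Ghat σ τ → CmpB σ τ u v b)) := by
  classical
  refine ⟨GA G, ?_, ?_, ?_, ?_, ?_, ?_, ?_⟩
  · intro u v b hg
    exact GA.lift hg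
  · intro σ τ h
    exact ga_eq h
  · -- increasing variables are strictly above x₀
    intro i hInc σ τ h
    have hinc : Inc G i := by
      intro σ' τ' hs
      have := hInc σ' τ' hs
      simp only [Sum.elim_inl, Sum.elim_inr]
      omega
    have hnb : ¬ BelV G i := fun hb => inc_not_belv hidem hLTT1fail hinc hb
    have hs' : SAb' G i :=
      SAb'.inc (k := 0) (k' := 0) hinc (by norm_num) (by norm_num) (WPath.refl _)
    constructor
    · have := h _ _ _ (GA.abvLs hnb hs')
      simpa [CmpB] using this
    · have := h _ _ _ (GA.abvRs hnb hs')
      simpa [CmpB] using this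
  · -- decreasing variables are strictly below x₀
    intro i hDec σ τ h
    have hd : Dec G i := by
      intro σ' τ' hs
      have := hDec σ' τ' hs
      simp only [Sum.elim_inl, Sum.elim_inr]
      omega
    have hb : BelV G i := ⟨i, 0, 0, 0, hd, by norm_num, by norm_num, WPath.refl _⟩
    constructor
    · have := h _ _ _ (GA.belL hb)
      simpa [CmpB] using this
    · have := h _ _ _ (GA.belR hb)
      simpa [CmpB] using this
  · -- every variable is related to x₀
    intro i
    by_cases hb : BelV G i
    · left
      intro σ τ h
      have := h _ _ _ (GA.belL hb)
      simp only [CmpB, if_true, Sum.elim_inl] at this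
      omega
    · right
      intro σ τ h
      have := h _ _ _ (GA.abvLw hb)
      simpa [CmpB] using this
  · -- satisfiability
    obtain ⟨σ0, τ0, hs⟩ := hsat
    obtain ⟨Mb, hMb0, hMb⟩ := exists_abs_bound (Sum.elim σ0 τ0)
    exact ⟨_, _, ga_sat hidem hs hMb0 hMb⟩
  · -- idempotence
    intro u v b
    constructor
    · -- composition-entailed implies entailed
      intro hC σh τh hst
      obtain ⟨t1, t2, t3, h12, h23⟩ := exists_triple hidem hsat
      obtain ⟨B1, hB10, hB1⟩ := exists_abs_bound t1
      obtain ⟨B2, hB20, hB2⟩ := exists_abs_bound t2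
      obtain ⟨B3, hB30, hB3⟩ := exists_abs_bound t3
      set M0 : ℤ := max B1 (max B2 B3) with hM0def
      have hM0 : ∀ x : Nd n, |trv t1 t2 t3 x| ≤ M0 := by
        intro x
        unfold trv
        rcases le_or_gt x.2 0 with h | h
        · split
          · exact le_trans (hB1 x.1) (le_max_left _ _)
          · split
            · exact le_trans (hB2 x.1) (le_trans (le_max_left _ _) (le_max_right _ _))
            · exact le_trans (hB3 x.1) (le_trans (le_max_right _ _) (le_max_right _ _))
        · split
          · exact le_trans (hB1 x.1) (le_max_left _ _)
          · split
            · exact le_trans (hB2 x.1) (le_trans (le_max_left _ _) (le_max_right _ _))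
            · exact le_trans (hB3 x.1) (le_trans (le_max_right _ _) (le_max_right _ _))
      have hD0 := dbound h12 h23 hM0
      obtain ⟨Ms, hMs0, hMs⟩ := exists_abs_bound σh
      obtain ⟨Mt, hMt0, hMt⟩ := exists_abs_bound τh
      set Mh : ℤ := max Ms Mt with hMhdef
      have hMh : ∀ w, |σh w| ≤ Mh ∧ |τh w| ≤ Mh := fun w =>
        ⟨le_trans (hMs w) (le_max_left _ _), le_trans (hMt w) (le_max_right _ _)⟩
      set D0 : ℕ := (2*M0).toNat with hD0def
      set K : ℤ := (D0 : ℤ) + 2 with hKdef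
      set L0 : ℤ := -(K*(Mh+1)) - 2*(D0:ℤ) - 2 with hL0def
      have hm1 := mid_sat1 (K := K) (L0 := L0) hidem hst hD0 hMh hKdef hL0def
      have hm2 := mid_sat2 (K := K) (L0 := L0) hidem hst hD0 hMh hKdef hL0def
      have hC' := hC _ _ ⟨_, hm1, hm2⟩
      exact cmpb_unscale (by positivity) hC'
    · -- entailed implies composition-entailed
      rintro hS σ τ ⟨μ, h1, h2⟩
      exact hS σ τ (ga_trans hidem h1 h2)
end
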